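/- arXiv:2406.06061 — 3 statements merged into one kernel-verified Lean document; each statement's English description precedes it below -/
import Mathlib

section
/- Let X be a real m×n matrix, let λ₁, λ_F be nonnegative reals, and define the SLIM loss l_SLIM(W) := ‖X − X·W‖_F² + λ_F·‖W‖_F² + λ₁·(Σ_{i,j} |W_{ij}|) for real n×n matrices W. Let W be an n×n matrix with nonnegative entries whose i-th row is identically zero, let W' be an n×n matrix with nonnegative entries that agrees with W in every row except possibly row i, and assume the diagonal entry W'_{ii} = 0. With X̂ := X − X·W and, for items i, j, the single-entry loss l_{ij}(w) := λ₁·w + λ_F·w² + Σ_{u=1}^{m} (X̂_{uj} − X_{ui}·w)², the identity l_SLIM(W') = l_SLIM(W) + Σ_{j ≠ i} ( l_{ij}(W'_{ij}) − l_{ij}(0) ) holds. -/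
open Finset Matrix

/-- The SLIM loss: squared Frobenius norm of the residual `X - X * W`,
plus Frobenius (`λ_F`) and entrywise-L1 (`λ₁`) regularization of `W`. -/
noncomputable def lSLIM {m n : ℕ} (X : Matrix (Fin m) (Fin n) ℝ) (l1 lF : ℝ)
    (W : Matrix (Fin n) (Fin n) ℝ) : ℝ :=
  (∑ u, ∑ j, (X u j - (X * W) u j) ^ 2) + lF * (∑ k, ∑ j, (W k j) ^ 2)
    + l1 * (∑ k, ∑ j, |W k j|)

/-- The single-entry SLIM loss `l_{ij}(w)`, measured with respect to the
residual matrix `X̂ := X - X * W` of the current SLIM matrix `W`. -/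
noncomputable def lSingleEntry {m n : ℕ} (X : Matrix (Fin m) (Fin n) ℝ) (l1 lF : ℝ)
    (W : Matrix (Fin n) (Fin n) ℝ) (i j : Fin n) (w : ℝ) : ℝ :=
  l1 * w + lF * w ^ 2 + ∑ u, ((X - X * W) u j - X u i * w) ^ 2

/-- Lemma 1 of the paper: if `W` is nonnegative with zero `i`-th row and `W'`
is nonnegative, agrees with `W` outside row `i`, and has `W' i i = 0`, then the
SLIM loss of `W'` decomposes as the SLIM loss of `W` plus the sum over `j ≠ i`
of the single-entry improvements `l_{ij}(W'_{ij}) - l_{ij}(0)`. -/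
theorem slim_loss_row_decomposition {m n : ℕ} (X : Matrix (Fin m) (Fin n) ℝ)
    (l1 lF : ℝ) (hl1 : 0 ≤ l1) (hlF : 0 ≤ lF) (i : Fin n)
    (W W' : Matrix (Fin n) (Fin n) ℝ)
    (hW : ∀ k j, 0 ≤ W k j) (hWrow : ∀ j, W i j = 0)
    (hW' : ∀ k j, 0 ≤ W' k j) (hagree : ∀ k j, k ≠ i → W' k j = W k j)
    (hdiag : W' i i = 0) :
    lSLIM X l1 lF W' =
      lSLIM X l1 lF W +
        ∑ j ∈ Finset.univ.erase i,
          (lSingleEntry X l1 lF W i j (W' i j) - lSingleEntry X l1 lF W i j 0) := by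
  have hmul : ∀ u j, (X * W') u j = (X * W) u j + X u i * W' i j := by
    intro u j
    simp only [Matrix.mul_apply]
    have h : ∀ k ∈ Finset.univ, X u k * W' k j
        = X u k * W k j + (if k = i then X u i * W' i j else 0) := by
      intro k _
      by_cases hk : k = i
      · subst hk; simp [hWrow]
      · simp [hk, hagree k j hk]
    rw [Finset.sum_congr rfl h, Finset.sum_add_distrib, Finset.sum_ite_eq']
    simp
  have hres : ∀ j, ∑ u, (X u j - (X * W') u j) ^ 2
      = ∑ u, ((X - X * W) u j - X u i * W' i j) ^ 2 := by
    intro j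
    refine Finset.sum_congr rfl fun u _ => ?_
    rw [hmul]
    simp only [Matrix.sub_apply]
    ring
  have hswap : ∀ (f : Fin m → Fin n → ℝ), ∑ u, ∑ j, f u j = ∑ j, ∑ u, f u j :=
    fun f => Finset.sum_comm
  -- Frobenius part
  have hF : (∑ k, ∑ j, (W' k j) ^ 2)
      = (∑ k, ∑ j, (W k j) ^ 2) + ∑ j ∈ Finset.univ.erase i, (W' i j) ^ 2 := by
    rw [← Finset.add_sum_erase _ _ (Finset.mem_univ i),
        ← Finset.add_sum_erase _ (fun k => ∑ j, (W k j) ^ 2) (Finset.mem_univ i)]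
    have h1 : ∑ k ∈ Finset.univ.erase i, ∑ j, (W' k j) ^ 2
        = ∑ k ∈ Finset.univ.erase i, ∑ j, (W k j) ^ 2 := by
      refine Finset.sum_congr rfl fun k hk => Finset.sum_congr rfl fun j _ => ?_
      rw [hagree k j (Finset.ne_of_mem_erase hk)]
    have h2 : ∑ j, (W' i j) ^ 2 = ∑ j ∈ Finset.univ.erase i, (W' i j) ^ 2 := by
      rw [← Finset.add_sum_erase _ (fun j => (W' i j) ^ 2) (Finset.mem_univ i), hdiag]
      ring
    have h3 : ∑ j, (W i j) ^ 2 = (0 : ℝ) := by simp [hWrow]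
    rw [h1, h2, h3]
    ring
  -- L1 part
  have hL1 : (∑ k, ∑ j, |W' k j|)
      = (∑ k, ∑ j, |W k j|) + ∑ j ∈ Finset.univ.erase i, W' i j := by
    rw [← Finset.add_sum_erase _ _ (Finset.mem_univ i),
        ← Finset.add_sum_erase _ (fun k => ∑ j, |W k j|) (Finset.mem_univ i)]
    have h1 : ∑ k ∈ Finset.univ.erase i, ∑ j, |W' k j|
        = ∑ k ∈ Finset.univ.erase i, ∑ j, |W k j| := by
      refine Finset.sum_congr rfl fun k hk => Finset.sum_congr rfl fun j _ => ?_
      rw [hagree k j (Finset.ne_of_mem_erase hk)]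
    have h2 : ∑ j, |W' i j| = ∑ j ∈ Finset.univ.erase i, W' i j := by
      rw [show (∑ j, |W' i j|) = ∑ j, W' i j from
            Finset.sum_congr rfl fun j _ => abs_of_nonneg (hW' i j),
          ← Finset.add_sum_erase _ (fun j => W' i j) (Finset.mem_univ i), hdiag, zero_add]
    have h3 : ∑ j, |W i j| = (0 : ℝ) := by simp [hWrow]
    rw [h1, h2, h3]
    ring
  -- residual total
  have hRtot : (∑ u, ∑ j, (X u j - (X * W') u j) ^ 2)
      = (∑ u, ∑ j, (X u j - (X * W) u j) ^ 2)
        + ∑ j ∈ Finset.univ.erase i,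
            ((∑ u, ((X - X * W) u j - X u i * W' i j) ^ 2)
              - ∑ u, ((X - X * W) u j) ^ 2) := by
    rw [hswap (fun u j => (X u j - (X * W') u j) ^ 2),
        hswap (fun u j => (X u j - (X * W) u j) ^ 2)]
    have hA : ∀ j, ∑ u, (X u j - (X * W) u j) ^ 2 = ∑ u, ((X - X * W) u j) ^ 2 := by
      intro j; exact Finset.sum_congr rfl fun u _ => by simp [Matrix.sub_apply]
    rw [Finset.sum_congr rfl (fun j _ => hres j),
        Finset.sum_congr rfl (fun j _ => hA j),
        ← Finset.add_sum_erase _ _ (Finset.mem_univ i),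
        ← Finset.add_sum_erase _ (fun j => ∑ u, ((X - X * W) u j) ^ 2) (Finset.mem_univ i),
        Finset.sum_sub_distrib]
    have hii : ∑ u, ((X - X * W) u i - X u i * W' i i) ^ 2
        = ∑ u, ((X - X * W) u i) ^ 2 := by
      simp [hdiag]
    rw [hii]; ring
  simp only [lSLIM, lSingleEntry]
  rw [hRtot, hF, hL1]
  have hz : ∀ j : Fin n,
      (l1 * W' i j + lF * (W' i j) ^ 2 + ∑ u, ((X - X * W) u j - X u i * W' i j) ^ 2)
        - (l1 * 0 + lF * 0 ^ 2 + ∑ u, ((X - X * W) u j - X u i * 0) ^ 2)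
      = l1 * W' i j + lF * (W' i j) ^ 2
        + ((∑ u, ((X - X * W) u j - X u i * W' i j) ^ 2) - ∑ u, ((X - X * W) u j) ^ 2) := by
    intro j
    simp
    ring
  rw [Finset.sum_congr rfl (fun j _ => hz j)]
  rw [Finset.sum_add_distrib, Finset.sum_add_distrib,
      ← Finset.mul_sum, ← Finset.mul_sum]
  ring
end

section
/- Let X be a real m×n matrix, λ₁ ≥ 0, λ_F > 0, and let W be an n×n nonnegative matrix whose i-th row is zero. Set X̂ := X − X·W and l_{ij}(w) := λ₁·w + λ_F·w² + Σ_u (X̂_{uj} − X_{ui}·w)². Define the row v ∈ ℝ^n by v_j := max{ (−λ₁/2 + Σ_u X̂_{uj}·X_{ui}) / (λ_F + Σ_u X_{ui}²), 0 } for j ≠ i and v_i := 0, and let W* := W + e_i·vᵀ. Then for every nonnegative matrix W' that agrees with W outside row i and has W'_{ii} = 0, l_SLIM(W*) ≤ l_SLIM(W'); that is, filling row i componentwise with the clipped single-entry minimizers minimizes the SLIM loss over all admissible choices of row i. -/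
open Finset Matrix

/-- The greedy row for item `i`: entry `j ≠ i` is the clipped single-entry
minimizer `max{(-λ₁/2 + Σ_u X̂_{uj} X_{ui}) / (λ_F + Σ_u X_{ui}²), 0}` computed
from the residual `X̂ := X - X * W`, and entry `i` is zero. -/
noncomputable def greedyRow {m n : ℕ} (X : Matrix (Fin m) (Fin n) ℝ)
    (l1 lF : ℝ) (W : Matrix (Fin n) (Fin n) ℝ) (i : Fin n) : Fin n → ℝ :=
  fun j =>
    if j = i then 0
    else
      max ((-l1 / 2 + ∑ u, (X - X * W) u j * X u i) /
            (lF + ∑ u, (X u i) ^ 2)) 0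

lemma quad_key (a c w : ℝ) (ha : 0 < a) (hw : 0 ≤ w) :
    a * (max (c / a) 0) ^ 2 - 2 * c * (max (c / a) 0) ≤ a * w ^ 2 - 2 * c * w := by
  rcases le_or_gt c 0 with hc | hc
  · rw [max_eq_right (div_nonpos_of_nonpos_of_nonneg hc ha.le)]
    nlinarith
  · rw [max_eq_left (le_of_lt (div_pos hc ha))]
    have ha' : a ≠ 0 := ne_of_gt ha
    have h := sq_nonneg (a * w - c)
    have : a * (c / a) ^ 2 - 2 * c * (c / a) = -(c ^ 2) / a := by field_simp; ring
    rw [this]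
    rw [div_le_iff₀ ha] at *
    nlinarith [sq_nonneg (a * w - c)]

/-- Filling row `i` with the clipped single-entry minimizers minimizes the
SLIM loss over all admissible choices of row `i`: among all nonnegative `W'`
that agree with `W` outside row `i` and have `W'_{ii} = 0`, the matrix
`W* = W.updateRow i (greedyRow …)` achieves the least SLIM loss. -/
theorem greedyRow_minimizes {m n : ℕ} (X : Matrix (Fin m) (Fin n) ℝ)
    (l1 lF : ℝ) (hl1 : 0 ≤ l1) (hlF : 0 < lF) (i : Fin n)
    (W : Matrix (Fin n) (Fin n) ℝ)
    (hW : ∀ k j, 0 ≤ W k j) (hWrow : ∀ j, W i j = 0) :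
    ∀ W' : Matrix (Fin n) (Fin n) ℝ,
      (∀ k j, 0 ≤ W' k j) → (∀ k j, k ≠ i → W' k j = W k j) → W' i i = 0 →
      lSLIM X l1 lF (W.updateRow i (greedyRow X l1 lF W i)) ≤
        lSLIM X l1 lF W' := by
  intro W' hW'nn hW'eq hW'ii
  set v := greedyRow X l1 lF W i with hv
  have hvnn : ∀ j, 0 ≤ v j := by
    intro j
    rw [hv]
    unfold greedyRow
    split
    · exact le_refl 0
    · exact le_max_right _ _
  have hvi : v i = 0 := by simp [hv, greedyRow]
  have hW'alt : W' = W.updateRow i (W' i) := by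
    ext k j
    by_cases hk : k = i
    · subst hk; simp
    · rw [Matrix.updateRow_ne hk, hW'eq k j hk]
  rw [hW'alt]
  -- multiplication lemma
  have hmul : ∀ (w : Fin n → ℝ) (u : Fin m) (j : Fin n),
      (X * W.updateRow i w) u j = (X * W) u j + X u i * w j := by
    intro w u j
    simp only [Matrix.mul_apply]
    rw [← Finset.add_sum_erase _ _ (Finset.mem_univ i),
        ← Finset.add_sum_erase _ (fun k => X u k * W k j) (Finset.mem_univ i)]
    rw [Matrix.updateRow_self, hWrow j]
    have : ∀ k ∈ Finset.univ.erase i,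
        X u k * W.updateRow i w k j = X u k * W k j := by
      intro k hk
      rw [Matrix.updateRow_ne (Finset.ne_of_mem_erase hk)]
    rw [Finset.sum_congr rfl this]
    ring
  -- row-sum lemma for functions of entries
  have hrowsum : ∀ (w : Fin n → ℝ) (f : ℝ → ℝ), f 0 = 0 →
      (∑ k, ∑ j, f (W.updateRow i w k j)) = (∑ k, ∑ j, f (W k j)) + ∑ j, f (w j) := by
    intro w f hf0
    rw [← Finset.add_sum_erase _ (fun k => ∑ j, f (W.updateRow i w k j)) (Finset.mem_univ i),
        ← Finset.add_sum_erase _ (fun k => ∑ j, f (W k j)) (Finset.mem_univ i)]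
    have h1 : ∑ j, f (W.updateRow i w i j) = ∑ j, f (w j) := by
      simp
    have h2 : ∑ j, f (W i j) = 0 := by
      simp [hWrow, hf0]
    have h3 : ∀ k ∈ Finset.univ.erase i,
        (∑ j, f (W.updateRow i w k j)) = ∑ j, f (W k j) := by
      intro k hk
      simp [Matrix.updateRow_ne (Finset.ne_of_mem_erase hk)]
    rw [h1, h2, Finset.sum_congr rfl h3]
    ring
  -- decomposition
  have hdecomp : ∀ (w : Fin n → ℝ), (∀ j, 0 ≤ w j) →
      lSLIM X l1 lF (W.updateRow i w) =
      (∑ j, ((∑ u, ((X - X * W) u j - X u i * w j) ^ 2)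
          + lF * (w j) ^ 2 + l1 * w j))
        + (lF * (∑ k, ∑ j, (W k j) ^ 2) + l1 * (∑ k, ∑ j, |W k j|)) := by
    intro w hwnn
    unfold lSLIM
    rw [hrowsum w (fun x => x ^ 2) (by norm_num),
        hrowsum w (fun x => |x|) (by norm_num)]
    have h1 : (∑ u, ∑ j, (X u j - (X * W.updateRow i w) u j) ^ 2)
        = ∑ j, ∑ u, ((X - X * W) u j - X u i * w j) ^ 2 := by
      rw [Finset.sum_comm]
      congr 1
      ext j
      congr 1
      ext u
      rw [hmul]
      simp [Matrix.sub_apply]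
      ring
    rw [h1]
    have h2 : ∀ j, |w j| = w j := fun j => abs_of_nonneg (hwnn j)
    simp only [h2, mul_add, Finset.sum_add_distrib, ← Finset.mul_sum]
    ring
  rw [hdecomp v hvnn, hdecomp (W' i) (fun j => hW'nn i j)]
  apply add_le_add_left
  apply Finset.sum_le_sum
  intro j _
  by_cases hj : j = i
  · subst hj
    rw [hvi, hW'ii]
  · -- per-column inequality
    set a : ℝ := lF + ∑ u, (X u i) ^ 2 with hadef
    have ha : 0 < a := by
      apply lt_of_lt_of_le hlF
      simp only [hadef, le_add_iff_nonneg_right]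
      positivity
    set b : ℝ := ∑ u, (X - X * W) u j * X u i with hbdef
    set c : ℝ := b - l1 / 2 with hcdef
    have hvj : v j = max (c / a) 0 := by
      rw [hv]
      unfold greedyRow
      rw [if_neg hj]
      congr 2
      rw [hcdef, hbdef]
      ring
    have expand : ∀ x : ℝ, (∑ u, ((X - X * W) u j - X u i * x) ^ 2)
        + lF * x ^ 2 + l1 * x
        = (∑ u, ((X - X * W) u j) ^ 2) + (a * x ^ 2 - 2 * c * x) := by
      intro x
      have : ∀ u, ((X - X * W) u j - X u i * x) ^ 2
          = ((X - X * W) u j) ^ 2 - 2 * ((X - X * W) u j * X u i) * x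
            + (X u i) ^ 2 * x ^ 2 := by intro u; ring
      simp only [this]
      rw [Finset.sum_add_distrib, Finset.sum_sub_distrib, ← Finset.sum_mul,
          ← Finset.sum_mul, ← Finset.mul_sum]
      rw [hcdef, hbdef, hadef]
      ring
    rw [expand, expand, hvj]
    apply add_le_add_right
    exact quad_key a c (W' i j) ha (hW'nn i j)
end

section
/- Let X be a real m×n matrix, λ₁ ≥ 0, λ_F > 0, and let W be an n×n nonnegative matrix whose i-th row is zero. Let W* be the matrix obtained from W by filling row i with entries W*_{ij} := max{ (−λ₁/2 + Σ_u X̂_{uj}·X_{ui}) / (λ_F + Σ_u X_{ui}²), 0 } for j ≠ i and W*_{ii} := 0, where X̂ := X − X·W. Then the greedy step never increases the SLIM loss: l_SLIM(W*) ≤ l_SLIM(W). -/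
open Finset Matrix

lemma key_ineq (a b v : ℝ) (ha : 0 < a) (hv : v = max ((-b) / (2 * a)) 0) :
    a * v ^ 2 + b * v ≤ 0 := by
  rcases le_or_gt ((-b) / (2 * a)) 0 with h | h
  · rw [hv, max_eq_right h]; simp
  · rw [hv, max_eq_left h.le]
    have h2a : (2 * a) ≠ 0 := by positivity
    have hb : 0 < -b := by
      by_contra hb
      push_neg at hb
      have : (-b) / (2 * a) ≤ 0 := div_nonpos_of_nonpos_of_nonneg (by linarith) (by positivity)
      linarith
    have : a * ((-b) / (2 * a)) ^ 2 + b * ((-b) / (2 * a)) = -(b ^ 2 / (4 * a)) := by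
      field_simp
      ring
    rw [this]
    have : 0 ≤ b ^ 2 / (4 * a) := by positivity
    linarith

/-- The greedy step never increases the SLIM loss: filling the zero row `i`
of `W` with the clipped single-entry minimizers gives `l_SLIM(W*) ≤ l_SLIM(W)`. -/
theorem greedyRow_le_self {m n : ℕ} (X : Matrix (Fin m) (Fin n) ℝ)
    (l1 lF : ℝ) (hl1 : 0 ≤ l1) (hlF : 0 < lF) (i : Fin n)
    (W : Matrix (Fin n) (Fin n) ℝ)
    (hW : ∀ k j, 0 ≤ W k j) (hWrow : ∀ j, W i j = 0) :
    lSLIM X l1 lF (W.updateRow i (greedyRow X l1 lF W i)) ≤ lSLIM X l1 lF W := by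
  set w := greedyRow X l1 lF W i with hwdef
  have hwi : w i = 0 := by simp [hwdef, greedyRow]
  have hwpos : ∀ j, 0 ≤ w j := by
    intro j
    simp only [hwdef, greedyRow]
    split
    · exact le_rfl
    · exact le_max_right _ _
  have ha : 0 < lF + ∑ u, (X u i) ^ 2 := by
    have := Finset.sum_nonneg (fun u (_ : u ∈ Finset.univ) => sq_nonneg (X u i))
    linarith
  -- the per-column change terms
  set T : Fin n → ℝ := fun j =>
    (lF + ∑ u, (X u i) ^ 2) * (w j) ^ 2
      + (l1 - 2 * ∑ u, (X - X * W) u j * X u i) * w j with hT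
  have hTnonpos : ∀ j, T j ≤ 0 := by
    intro j
    by_cases hj : j = i
    · simp [hT, hj, hwi]
    · refine key_ineq _ _ _ ha ?_
      have harg : (-(l1 - 2 * ∑ u, (X - X * W) u j * X u i)) / (2 * (lF + ∑ u, (X u i) ^ 2))
          = (-l1 / 2 + ∑ u, (X - X * W) u j * X u i) / (lF + ∑ u, (X u i) ^ 2) := by
        rw [div_eq_div_iff (by positivity) (by positivity)]
        ring
      rw [harg, hwdef]
      unfold greedyRow
      simp [hj]
  -- multiplication with the updated row
  have hmul : ∀ u j, (X * W.updateRow i w) u j = (X * W) u j + X u i * w j := by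
    intro u j
    simp only [mul_apply]
    rw [Finset.sum_congr rfl (fun k (_ : k ∈ Finset.univ) =>
      show X u k * (W.updateRow i w) k j
          = X u k * W k j + (if k = i then X u i * w j else 0) by
        by_cases hk : k = i <;> simp [Matrix.updateRow_apply, hk, hWrow j])]
    rw [Finset.sum_add_distrib, Finset.sum_ite_eq' Finset.univ i (fun _ => X u i * w j)]
    simp
  -- regularizer sums decompose
  have hreg : ∀ (f : ℝ → ℝ), f 0 = 0 →
      ∑ k, ∑ j, f ((W.updateRow i w) k j) = (∑ k, ∑ j, f (W k j)) + ∑ j, f (w j) := by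
    intro f hf
    rw [← Finset.add_sum_erase _ (fun k => ∑ j, f ((W.updateRow i w) k j)) (Finset.mem_univ i),
        ← Finset.add_sum_erase _ (fun k => ∑ j, f (W k j)) (Finset.mem_univ i)]
    have hrow : ∑ j, f (W i j) = 0 := by simp [hWrow, hf]
    have he : ∀ k ∈ Finset.univ.erase i,
        ∑ j, f ((W.updateRow i w) k j) = ∑ j, f (W k j) := by
      intro k hk
      rw [Finset.mem_erase] at hk
      simp [Matrix.updateRow_apply, hk.1]
    rw [Finset.sum_congr rfl he, hrow]
    simp only [Matrix.updateRow_self]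
    ring
  have hregsq := hreg (fun x => x ^ 2) (by norm_num)
  have hregabs := hreg (fun x => |x|) (by norm_num)
  have habsw : ∀ j, |w j| = w j := fun j => abs_of_nonneg (hwpos j)
  -- main identity
  have main : lSLIM X l1 lF (W.updateRow i w) = lSLIM X l1 lF W + ∑ j, T j := by
    unfold lSLIM
    rw [Finset.sum_congr rfl (fun u (_ : u ∈ Finset.univ) => Finset.sum_congr rfl
      (fun j (_ : j ∈ Finset.univ) => show (X u j - (X * W.updateRow i w) u j) ^ 2 = _ from by
        rw [hmul u j])),
      hregsq, hregabs]
    simp only [habsw]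
    rw [Finset.sum_comm (f := fun u j => (X u j - ((X * W) u j + X u i * w j)) ^ 2),
       Finset.sum_comm (f := fun u j => (X u j - (X * W) u j) ^ 2)]
    have perj : ∀ j, ∑ u, (X u j - ((X * W) u j + X u i * w j)) ^ 2
        = (∑ u, (X u j - (X * W) u j) ^ 2) + T j - lF * (w j) ^ 2 - l1 * w j := by
      intro j
      have hpt : ∀ u, (X u j - ((X * W) u j + X u i * w j)) ^ 2
          = (X u j - (X * W) u j) ^ 2
            + ((X u i) ^ 2 * (w j) ^ 2 - 2 * ((X - X * W) u j * X u i) * w j) := by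
        intro u
        simp only [Matrix.sub_apply]
        ring
      rw [Finset.sum_congr rfl (fun u _ => hpt u), Finset.sum_add_distrib,
        Finset.sum_sub_distrib, ← Finset.sum_mul, ← Finset.sum_mul]
      rw [show ∑ u, 2 * ((X - X * W) u j * X u i) = 2 * ∑ u, (X - X * W) u j * X u i from by
        rw [Finset.mul_sum]]
      rw [hT]
      ring
    rw [Finset.sum_congr rfl (fun j _ => perj j)]
    simp only [Finset.sum_add_distrib, Finset.sum_sub_distrib, ← Finset.mul_sum]
    ring
  rw [main]
  have : ∑ j, T j ≤ 0 := Finset.sum_nonpos (fun j _ => hTnonpos j)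
  linarith
end
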